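/- Let s, d be positive integers and let w ≥ 3 be an odd integer with gcd(s, d, w) = 1. Assume moreover that if w = 3 then 3 does not divide s. Then the arithmetic progression {s + d·i : 0 ≤ i ≤ (w−3)/2} contains at least one element coprime to w. -/

import Mathlib

/-- If no prime divides both `x` and `w`, then `x` is coprime to `w`. -/
lemma aux_coprime_of_primes (x w : ℕ)
    (h : ∀ q, Nat.Prime q → q ∣ w → ¬ q ∣ x) : Nat.Coprime x w := by
  by_contra hcon
  have hq := Nat.minFac_prime (show Nat.gcd x w ≠ 1 from hcon)
  exact h _ hq ((Nat.minFac_dvd _).trans (Nat.gcd_dvd_right _ _))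
    ((Nat.minFac_dvd _).trans (Nat.gcd_dvd_left _ _))

lemma aux_dvd_add_cancel {q a b : ℕ} (h1 : q ∣ a + b) (h2 : q ∣ b) : q ∣ a := by
  have := Nat.dvd_sub h1 h2
  simpa using this

lemma aux_dvd_add_cancel' {q a b : ℕ} (h1 : q ∣ a + b) (h2 : q ∣ a) : q ∣ b := by
  have := Nat.dvd_sub h1 h2
  simpa using this

lemma aux_gcd_modeq {a b n : ℕ} (h : a ≡ b [MOD n]) : Nat.gcd a n = Nat.gcd b n := by
  rw [Nat.gcd_comm a n, Nat.gcd_comm b n, Nat.gcd_rec n a, Nat.gcd_rec n b, h]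

/-- Key lemma: any (w-1)/2 consecutive integers contain an element coprime to odd w ≥ 3,
with the special condition for w = 3. -/
lemma aux_key : ∀ w : ℕ, 3 ≤ w → Odd w → ∀ t : ℕ, (w = 3 → ¬ 3 ∣ t) →
    ∃ i ≤ (w - 3) / 2, Nat.Coprime (t + i) w := by
  intro w
  induction w using Nat.strong_induction_on with
  | _ w ih =>
  intro hw hwodd t h3
  have hw2 : w % 2 = 1 := Nat.odd_iff.mp hwodd
  have hw2' : ¬ (2 : ℕ) ∣ w := by omega
  by_cases hsq : Squarefree w
  · -- squarefree case
    set p := w.minFac with hp_def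
    have hp : p.Prime := Nat.minFac_prime (by omega)
    have hpd : p ∣ w := Nat.minFac_dvd w
    have hp3 : 3 ≤ p := by
      have h2 := hp.two_le
      by_contra h
      have hpe : p = 2 := by omega
      rw [hpe] at hpd
      exact hw2' hpd
    set m := w / p with hm_def
    have hpm : p * m = w := Nat.mul_div_cancel' hpd
    have hmw : m ∣ w := Nat.div_dvd_of_dvd hpd
    have hm2 : ¬ 2 ∣ m := fun h => hw2' (h.trans hmw)
    have hm0 : m ≠ 0 := by intro h; rw [h, mul_zero] at hpm; omega
    have h3m : 3 * m ≤ w := by rw [← hpm]; exact Nat.mul_le_mul_right m hp3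
    rcases Nat.lt_or_ge m 2 with hm1 | hm1
    · -- m = 1, so w = p is prime
      have hmeq : m = 1 := by omega
      have hwp : Nat.Prime w := by rw [← hpm, hmeq, mul_one]; exact hp
      by_cases hw3 : w = 3
      · refine ⟨0, by omega, ?_⟩
        rw [add_zero, hw3]
        exact Nat.coprime_comm.mp ((Nat.Prime.coprime_iff_not_dvd (by norm_num)).mpr (h3 hw3))
      · -- w ≥ 5 prime
        by_cases hdt : w ∣ t
        · refine ⟨1, by omega, Nat.coprime_comm.mp ((hwp.coprime_iff_not_dvd).mpr ?_)⟩
          intro h1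
          have hw1 : w ∣ 1 := aux_dvd_add_cancel' h1 hdt
          exact absurd (Nat.le_of_dvd one_pos hw1) (by omega)
        · exact ⟨0, by omega, by
            rw [add_zero]
            exact Nat.coprime_comm.mp ((hwp.coprime_iff_not_dvd).mpr hdt)⟩
    · -- m ≥ 2, odd, so m ≥ 3; rule out m = 3
      have hm3 : m ≠ 3 := by
        intro hmeq
        have h3w : (3 : ℕ) ∣ w := hmeq ▸ hmw
        have hple : p ≤ 3 := Nat.minFac_le_of_dvd (by norm_num) h3w
        have hpeq : p = 3 := by omega
        have hw9 : w = 9 := by rw [← hpm, hpeq, hmeq]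
        have := hsq 3 (by rw [hw9]; norm_num)
        rw [Nat.isUnit_iff] at this
        omega
      have hm5 : 5 ≤ m := by
        have : m % 2 = 1 := by omega
        omega
      have hmlt : m < w := by omega
      have hmodd : Odd m := Nat.odd_iff.mpr (by omega)
      obtain ⟨i0, hi0le, hi0⟩ := ih m hmlt (by omega) hmodd t (by omega)
      have h2i0 : 2 * i0 ≤ m - 3 := by omega
      by_cases hA : Nat.Coprime (t + i0) w
      · exact ⟨i0, by omega, hA⟩
      · -- p divides t + i0
        have hq' := Nat.minFac_prime (show Nat.gcd (t + i0) w ≠ 1 from hA)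
        set q' := (Nat.gcd (t + i0) w).minFac with hq'def
        have hq't : q' ∣ t + i0 := (Nat.minFac_dvd _).trans (Nat.gcd_dvd_left _ _)
        have hq'w : q' ∣ w := (Nat.minFac_dvd _).trans (Nat.gcd_dvd_right _ _)
        have hq'm : ¬ q' ∣ m := by
          intro h
          have h1 : Nat.gcd (t + i0) m = 1 := hi0
          have h2 := Nat.dvd_gcd hq't h
          rw [h1] at h2
          exact hq'.one_lt.ne' (Nat.eq_one_of_dvd_one h2)
        have hq'p : q' = p := by
          rw [← hpm] at hq'w
          rcases (Nat.Prime.dvd_mul hq').mp hq'w with h | h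
          · exact (Nat.prime_dvd_prime_iff_eq hq' hp).mp h
          · exact absurd h hq'm
        have hpt : p ∣ t + i0 := hq'p ▸ hq't
        refine ⟨i0 + m, by omega, ?_⟩
        apply aux_coprime_of_primes
        intro q hq hqw hqx
        rw [← add_assoc] at hqx
        by_cases hqm : q ∣ m
        · have hqt : q ∣ t + i0 := aux_dvd_add_cancel hqx hqm
          have h1 : Nat.gcd (t + i0) m = 1 := hi0
          have h2 := Nat.dvd_gcd hqt hqm
          rw [h1] at h2
          exact hq.one_lt.ne' (Nat.eq_one_of_dvd_one h2)
        · have hqp : q = p := by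
            rw [← hpm] at hqw
            rcases (Nat.Prime.dvd_mul hq).mp hqw with h | h
            · exact (Nat.prime_dvd_prime_iff_eq hq hp).mp h
            · exact absurd h hqm
          have hpm' : p ∣ m := aux_dvd_add_cancel' (hqp ▸ hqx) hpt
          have hsqd : p * p ∣ w := by
            rw [← hpm]
            exact mul_dvd_mul dvd_rfl hpm'
          have := hsq p hsqd
          rw [Nat.isUnit_iff] at this
          exact hp.one_lt.ne' this
  · -- non-squarefree case
    rw [Nat.squarefree_iff_prime_squarefree] at hsq
    push_neg at hsq
    obtain ⟨p, hp', hp2⟩ := hsq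
    have hp : p.Prime := hp'
    have hpw : p ∣ w := dvd_trans (dvd_mul_left p p) hp2
    set m := w / p with hm_def
    have hpm : p * m = w := Nat.mul_div_cancel' hpw
    have hpm2 : p ∣ m := by
      have h2 : p * p ∣ p * m := hpm ▸ hp2
      exact (mul_dvd_mul_iff_left hp.pos.ne').mp h2
    have hp3 : 3 ≤ p := by
      have h2 : p ≠ 2 := by
        intro h; rw [h] at hpw; exact hw2' hpw
      have := hp.two_le; omega
    have hm0 : m ≠ 0 := by intro h; rw [h, mul_zero] at hpm; omega
    have hmp : p ≤ m := Nat.le_of_dvd (Nat.pos_of_ne_zero hm0) hpm2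
    have h3m : 3 * m ≤ w := by rw [← hpm]; exact Nat.mul_le_mul_right m hp3
    have hmlt : m < w := by omega
    have hmw : m ∣ w := Nat.div_dvd_of_dvd hpw
    have hm2' : ¬ 2 ∣ m := fun h => hw2' (h.trans hmw)
    have hmodd : Odd m := Nat.odd_iff.mpr (by omega)
    -- every prime of w divides m
    have hkey : ∀ q, Nat.Prime q → q ∣ w → q ∣ m := by
      intro q hq hqw
      rw [← hpm] at hqw
      rcases (Nat.Prime.dvd_mul hq).mp hqw with h | h
      · exact ((Nat.prime_dvd_prime_iff_eq hq hp).mp h) ▸ hpm2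
      · exact h
    by_cases hm3 : m = 3 ∧ 3 ∣ t
    · obtain ⟨hmeq, h3t⟩ := hm3
      refine ⟨1, by omega, ?_⟩
      apply aux_coprime_of_primes
      intro q hq hqw hqx
      have hq3 : q = 3 := by
        have h2 := hkey q hq hqw
        rw [hmeq] at h2
        exact (Nat.prime_dvd_prime_iff_eq hq (by norm_num)).mp h2
      rw [hq3] at hqx
      have h31 : (3:ℕ) ∣ 1 := aux_dvd_add_cancel' hqx h3t
      omega
    · have h3m' : m = 3 → ¬ 3 ∣ t := fun a b => hm3 ⟨a, b⟩
      obtain ⟨i, hile, hic⟩ := ih m hmlt (by omega) hmodd t h3m'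
      refine ⟨i, by omega, ?_⟩
      apply aux_coprime_of_primes
      intro q hq hqw hqx
      have hqm := hkey q hq hqw
      have h1 : Nat.gcd (t + i) m = 1 := hic
      have h2 := Nat.dvd_gcd hqx hqm
      rw [h1] at h2
      exact hq.one_lt.ne' (Nat.eq_one_of_dvd_one h2)

lemma aux_main : ∀ w s d : ℕ, 3 ≤ w → Odd w → Nat.gcd (Nat.gcd s d) w = 1 →
    (w = 3 → ¬ 3 ∣ s) → ∃ i ≤ (w - 3) / 2, Nat.Coprime (s + d * i) w := by
  intro w
  induction w using Nat.strong_induction_on with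
  | _ w ih =>
  intro s d hw hwodd hgcd h3
  have hw2 : w % 2 = 1 := Nat.odd_iff.mp hwodd
  have hw2' : ¬ (2 : ℕ) ∣ w := by omega
  by_cases hdw : Nat.Coprime d w
  · -- d invertible mod w
    obtain ⟨e, -, he⟩ := Nat.exists_mul_mod_eq_one_of_coprime hdw (by omega)
    have h3t : w = 3 → ¬ 3 ∣ s * e := by
      intro h3w hdvd
      rcases (Nat.Prime.dvd_mul (by norm_num : Nat.Prime 3)).mp hdvd with h | h
      · exact h3 h3w h
      · have hde : (3:ℕ) ∣ d * e := h.mul_left d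
        rw [h3w] at he
        omega
    obtain ⟨i, hile, hic⟩ := aux_key w hw hwodd (s * e) h3t
    refine ⟨i, hile, ?_⟩
    have h1w : 1 % w = 1 := Nat.mod_eq_of_lt (by omega)
    have h1 : d * e ≡ 1 [MOD w] := by
      show d * e % w = 1 % w
      rw [h1w, he]
    have hmod : d * (s * e + i) ≡ s + d * i [MOD w] := by
      calc d * (s * e + i) = s * (d * e) + d * i := by ring
        _ ≡ s * 1 + d * i [MOD w] := Nat.ModEq.add_right _ (Nat.ModEq.mul_left s h1)
        _ = s + d * i := by ring
    have hcop : Nat.Coprime (d * (s * e + i)) w := Nat.Coprime.mul hdw hic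
    show Nat.gcd (s + d * i) w = 1
    rw [← aux_gcd_modeq hmod]
    exact hcop
  · -- some prime divides both d and w
    have hq := Nat.minFac_prime (show Nat.gcd d w ≠ 1 from hdw)
    set q := (Nat.gcd d w).minFac with hqdef
    have hqd : q ∣ d := (Nat.minFac_dvd _).trans (Nat.gcd_dvd_left _ _)
    have hqw : q ∣ w := (Nat.minFac_dvd _).trans (Nat.gcd_dvd_right _ _)
    have hqs : ¬ q ∣ s := by
      intro h
      have h2 : q ∣ Nat.gcd (Nat.gcd s d) w := Nat.dvd_gcd (Nat.dvd_gcd h hqd) hqw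
      rw [hgcd] at h2
      exact hq.one_lt.ne' (Nat.eq_one_of_dvd_one h2)
    have hq3 : 3 ≤ q := by
      have h2 : q ≠ 2 := by intro h; rw [h] at hqw; exact hw2' hqw
      have := hq.two_le; omega
    set w' := w / q with hw'def
    have hw'q : q * w' = w := Nat.mul_div_cancel' hqw
    have hw'0 : w' ≠ 0 := by intro h; rw [h, mul_zero] at hw'q; omega
    have hw'w : w' ∣ w := Nat.div_dvd_of_dvd hqw
    have hw'2 : ¬ 2 ∣ w' := fun h => hw2' (h.trans hw'w)
    have h3w' : 3 * w' ≤ w := by rw [← hw'q]; exact Nat.mul_le_mul_right w' hq3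
    rcases Nat.lt_or_ge w' 2 with hw'1 | hw'1
    · -- w' = 1, w = q prime
      have hw'eq : w' = 1 := by omega
      have hwq : w = q := by rw [← hw'q, hw'eq, mul_one]
      refine ⟨0, by omega, ?_⟩
      rw [mul_zero, add_zero, hwq]
      exact Nat.coprime_comm.mp ((hq.coprime_iff_not_dvd).mpr hqs)
    · have hw'3 : 3 ≤ w' := by
        have : w' % 2 = 1 := by omega
        omega
      by_cases hc : w' = 3 ∧ 3 ∣ s
      · -- special case: w = 3q with q ≥ 5, and 3 ∣ s
        obtain ⟨hw'eq, h3s⟩ := hc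
        have h3d : ¬ 3 ∣ d := by
          intro h3d
          have h3w : (3:ℕ) ∣ w := hw'eq ▸ hw'w
          have h2 : (3:ℕ) ∣ Nat.gcd (Nat.gcd s d) w := Nat.dvd_gcd (Nat.dvd_gcd h3s h3d) h3w
          rw [hgcd] at h2
          omega
        have hqne3 : q ≠ 3 := fun h => h3d (h ▸ hqd)
        have hq5 : 5 ≤ q := by
          have h4 : q ≠ 4 := by intro h; rw [h] at hq; norm_num at hq
          omega
        have hw15 : 15 ≤ w := by
          rw [← hw'q, hw'eq]
          calc (15:ℕ) = 5 * 3 := by norm_num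
            _ ≤ q * 3 := Nat.mul_le_mul_right 3 hq5
        refine ⟨1, by omega, ?_⟩
        apply aux_coprime_of_primes
        intro r hr hrw hrx
        rw [mul_one] at hrx
        rw [← hw'q, hw'eq] at hrw
        rcases (Nat.Prime.dvd_mul hr).mp hrw with h | h
        · have hrq : r = q := (Nat.prime_dvd_prime_iff_eq hr hq).mp h
          exact hqs (aux_dvd_add_cancel (hrq ▸ hrx) (hrq ▸ hqd))
        · have hr3 : r = 3 := (Nat.prime_dvd_prime_iff_eq hr (by norm_num)).mp h
          exact h3d (aux_dvd_add_cancel' (hr3 ▸ hrx) h3s)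
      · have h3' : w' = 3 → ¬ 3 ∣ s := fun a b => hc ⟨a, b⟩
        have hgcd' : Nat.gcd (Nat.gcd s d) w' = 1 :=
          Nat.Coprime.coprime_dvd_right hw'w hgcd
        obtain ⟨i, hile, hic⟩ := ih w' (by omega) s d hw'3 (Nat.odd_iff.mpr (by omega)) hgcd' h3'
        refine ⟨i, by omega, ?_⟩
        apply aux_coprime_of_primes
        intro r hr hrw hrx
        rw [← hw'q] at hrw
        rcases (Nat.Prime.dvd_mul hr).mp hrw with h | h
        · have hrq : r = q := (Nat.prime_dvd_prime_iff_eq hr hq).mp h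
          exact hqs (aux_dvd_add_cancel (hrq ▸ hrx) (hrq ▸ hqd.mul_right i))
        · have h1 : Nat.gcd (s + d * i) w' = 1 := hic
          have h2 := Nat.dvd_gcd hrx h
          rw [h1] at h2
          exact hr.one_lt.ne' (Nat.eq_one_of_dvd_one h2)

theorem arithmetic_progression_has_coprime_element
    (s d w : ℕ) (hs : 0 < s) (hd : 0 < d) (hw : 3 ≤ w) (hwodd : Odd w)
    (hgcd : Nat.gcd (Nat.gcd s d) w = 1)
    (h3 : w = 3 → ¬ (3 ∣ s)) :
    ∃ i ≤ (w - 3) / 2, Nat.Coprime (s + d * i) w := by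
  exact aux_main w s d hw hwodd hgcd h3
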